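/- arXiv:2104.14562 — 2 statements merged into one kernel-verified Lean document; each statement's English description precedes it below -/
import Mathlib

section
/- Let F : ℝ^d → ℝ be differentiable, φ differentiable and σ-strongly convex, and suppose Lφ ± F are convex (relative smoothness with constant L). Let h be the indicator function of a nonempty closed convex set 𝒳, fix 0 < λ < 1/(2L), and define x̂ = argmin_y { F(y) + h(y) + (1/(2λ)) D_φ(y, x) } for x ∈ 𝒳 (the minimizer exists and is unique by strong convexity). Then: x is a stationary point of min F + h (i.e., 0 ∈ ∇F(x) + ∂h(x)) if and only if D_φ(x̂, x) = 0. -/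
section aux

variable {E : Type*} [NormedAddCommGroup E] [InnerProductSpace ℝ E] [CompleteSpace E]

lemma grad_inner' (f : E → ℝ) (x u : E) :
    (inner ℝ (gradient f x) u : ℝ) = fderiv ℝ f x u := by
  rw [gradient, InnerProductSpace.toDual_symm_apply]

lemma convex_fderiv_le' {f : E → ℝ} (hf : Differentiable ℝ f)
    (hc : ConvexOn ℝ Set.univ f) (x y : E) :
    f x + fderiv ℝ f x (y - x) ≤ f y := by
  set g : ℝ → ℝ := fun t => f (x + t • (y - x)) with hg
  have hgd : ∀ t : ℝ, HasDerivAt g (fderiv ℝ f (x + t • (y - x)) (y - x)) t := by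
    intro t
    have h1 : HasDerivAt (fun t : ℝ => x + t • (y - x)) (y - x) t := by
      simpa using ((hasDerivAt_id t).smul_const (y - x)).const_add x
    exact (hf _).hasFDerivAt.comp_hasDerivAt t h1
  have hgc : ConvexOn ℝ Set.univ g := by
    have h := hc.comp_affineMap (AffineMap.lineMap x y : ℝ →ᵃ[ℝ] E)
    have : (fun t : ℝ => f (x + t • (y - x))) =
        (f ∘ (AffineMap.lineMap x y : ℝ →ᵃ[ℝ] E)) := by
      funext t
      show f _ = f _
      congr 1
      simp only [AffineMap.lineMap_apply, vsub_eq_sub, vadd_eq_add]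
      module
    rw [hg, this]
    simpa using h
  have hslope := hgc.deriv_le_slope (Set.mem_univ (0 : ℝ)) (Set.mem_univ 1)
    one_pos (hgd 0).differentiableAt
  have hd0 : deriv g 0 = fderiv ℝ f x (y - x) := by
    have := (hgd 0).deriv
    simpa using this
  have hg0 : g 0 = f x := by simp [hg]
  have hg1 : g 1 = f y := by simp [hg]
  rw [hd0, slope_def_field, hg0, hg1] at hslope
  have : fderiv ℝ f x (y - x) ≤ f y - f x := by
    simpa using hslope
  linarith

end aux

theorem stmt9 {d : ℕ} (F φ : EuclideanSpace ℝ (Fin d) → ℝ)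
    (hF : Differentiable ℝ F) (hφ : Differentiable ℝ φ)
    (σ : ℝ) (hσ : 0 < σ)
    (hsc : ConvexOn ℝ Set.univ (fun z => φ z - σ / 2 * ‖z‖ ^ 2))
    (L : ℝ) (hL : 0 < L)
    (hL1 : ConvexOn ℝ Set.univ (fun z => L * φ z + F z))
    (hL2 : ConvexOn ℝ Set.univ (fun z => L * φ z - F z))
    (X : Set (EuclideanSpace ℝ (Fin d)))
    (hXne : X.Nonempty) (hXcl : IsClosed X) (hXcv : Convex ℝ X)
    (lam : ℝ) (hlam : 0 < lam) (hlam' : lam < 1 / (2 * L))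
    (D : EuclideanSpace ℝ (Fin d) → EuclideanSpace ℝ (Fin d) → ℝ)
    (hD : ∀ u v, D u v = φ u - φ v - (inner ℝ (gradient φ v) (u - v) : ℝ))
    (x xhat : EuclideanSpace ℝ (Fin d)) (hx : x ∈ X) (hxhat : xhat ∈ X)
    (hmin : ∀ y ∈ X,
      F xhat + 1 / (2 * lam) * D xhat x ≤ F y + 1 / (2 * lam) * D y x) :
    (∃ v : EuclideanSpace ℝ (Fin d),
        (∀ y ∈ X, (inner ℝ v (y - x) : ℝ) ≤ 0) ∧ gradient F x + v = 0) ↔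
      D xhat x = 0 := by
  set c : ℝ := 1 / (2 * lam) with hc
  have hcL : L < c := by
    have h1 : lam * (2 * L) < 1 := (lt_div_iff₀ (by positivity)).mp hlam'
    rw [hc, lt_div_iff₀ (by positivity)]
    nlinarith
  have hDalt : ∀ u v, D u v = φ u - φ v - fderiv ℝ φ v (u - v) := by
    intro u v; rw [hD, grad_inner']
  have hDxx : D x x = 0 := by simp [hDalt]
  -- strong convexity lower bound
  have hDlow : ∀ y, σ / 2 * ‖y - x‖ ^ 2 ≤ D y x := by
    intro y
    have hd2 : Differentiable ℝ (fun z : EuclideanSpace ℝ (Fin d) =>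
        φ z - σ / 2 * ‖z‖ ^ 2) := fun z =>
      (hφ z).sub ((differentiableAt_id.norm_sq ℝ).const_mul (σ / 2))
    have hq : HasFDerivAt (fun z : EuclideanSpace ℝ (Fin d) => φ z - σ / 2 * ‖z‖ ^ 2)
        (fderiv ℝ φ x - (σ / 2) • (2 • (innerSL ℝ x))) x := by
      have hn : HasFDerivAt (fun z : EuclideanSpace ℝ (Fin d) => ‖z‖ ^ 2)
          (2 • (innerSL ℝ x)) x := (hasStrictFDerivAt_norm_sq x).hasFDerivAt
      exact (hφ x).hasFDerivAt.sub (hn.const_mul (σ / 2))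
    have key := convex_fderiv_le' hd2 hsc x y
    rw [hq.fderiv] at key
    have hev : (fderiv ℝ φ x - (σ / 2) • (2 • (innerSL ℝ x))) (y - x)
        = fderiv ℝ φ x (y - x) - σ * (inner ℝ x (y - x) : ℝ) := by
      simp [ContinuousLinearMap.sub_apply, ContinuousLinearMap.smul_apply]
      try ring
    rw [hev] at key
    have hinner : (inner ℝ x (y - x) : ℝ) = (inner ℝ x y : ℝ) - ‖x‖ ^ 2 := by
      rw [inner_sub_right, real_inner_self_eq_norm_sq]
    have hnorm : ‖y - x‖ ^ 2 = ‖y‖ ^ 2 - 2 * (inner ℝ x y : ℝ) + ‖x‖ ^ 2 := by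
      rw [norm_sub_sq_real, real_inner_comm]
    rw [hDalt, hnorm]
    nlinarith [key, hinner]
  constructor
  · rintro ⟨v, hv, hveq⟩
    have hstat : (0 : ℝ) ≤ fderiv ℝ F x (xhat - x) := by
      have h1 := hv xhat hxhat
      have hvF : v = -gradient F x := by
        have := hveq
        linear_combination (norm := module) this
      rw [hvF, inner_neg_left, grad_inner'] at h1
      linarith
    have hsum : HasFDerivAt (fun z : EuclideanSpace ℝ (Fin d) => L * φ z + F z)
        (L • fderiv ℝ φ x + fderiv ℝ F x) x :=
      ((hφ x).hasFDerivAt.const_mul L).add (hF x).hasFDerivAt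
    have h1 := convex_fderiv_le' (f := fun z => L * φ z + F z)
      (fun z => ((hφ z).const_mul L).add (hF z)) hL1 x xhat
    rw [hsum.fderiv] at h1
    have h1' : L * φ x + F x + (L * fderiv ℝ φ x (xhat - x) + fderiv ℝ F x (xhat - x))
        ≤ L * φ xhat + F xhat := by
      simpa [ContinuousLinearMap.add_apply, ContinuousLinearMap.smul_apply] using h1
    have hm := hmin x hx
    rw [hDxx] at hm
    have hDhat := hDalt xhat x
    have hDle : D xhat x ≤ 0 := by
      by_contra hpos
      push_neg at hpos
      nlinarith [hm, h1', hstat, hDhat, hcL, hpos]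
    have hge : (0 : ℝ) ≤ D xhat x :=
      le_trans (by positivity) (hDlow xhat)
    linarith
  · intro hD0
    have hxx : xhat = x := by
      have hlow := hDlow xhat
      have h2 : ‖xhat - x‖ ^ 2 ≤ 0 := by nlinarith
      have h3 : ‖xhat - x‖ = 0 := by nlinarith [norm_nonneg (xhat - x), sq_nonneg ‖xhat - x‖]
      exact sub_eq_zero.mp (norm_eq_zero.mp h3)
    subst hxx
    refine ⟨-gradient F xhat, ?_, by simp⟩
    intro y hy
    set G : EuclideanSpace ℝ (Fin d) → ℝ :=
      fun z => F z + c * (φ z - φ xhat - fderiv ℝ φ xhat (z - xhat)) with hG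
    have hmin' : IsLocalMinOn G X xhat := by
      apply IsMinOn.localize
      rw [isMinOn_iff]
      intro z hz
      have := hmin z hz
      rw [hD0] at this
      have hz' := hDalt z xhat
      simp only [hG]
      simp only [sub_self, map_zero, sub_zero, mul_zero, add_zero]
      calc F xhat ≤ F z + c * D z xhat := by linarith
        _ = F z + c * (φ z - φ xhat - fderiv ℝ φ xhat (z - xhat)) := by rw [hz']
    have hlin : HasFDerivAt (fun z : EuclideanSpace ℝ (Fin d) => (fderiv ℝ φ xhat) (z - xhat))
        (fderiv ℝ φ xhat) xhat := by
      have h := (fderiv ℝ φ xhat).hasFDerivAt.comp xhat ((hasFDerivAt_id xhat).sub_const xhat)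
      simp only [ContinuousLinearMap.comp_id] at h
      exact h
    have hzero : HasFDerivAt
        (fun z : EuclideanSpace ℝ (Fin d) => φ z - φ xhat - (fderiv ℝ φ xhat) (z - xhat))
        (0 : EuclideanSpace ℝ (Fin d) →L[ℝ] ℝ) xhat := by
      have h := ((hφ xhat).hasFDerivAt.sub_const (φ xhat)).sub hlin
      rw [show (0 : EuclideanSpace ℝ (Fin d) →L[ℝ] ℝ) = fderiv ℝ φ xhat - fderiv ℝ φ xhat from (sub_self _).symm]
      exact h
    have hG0 : HasFDerivAt G (fderiv ℝ F xhat) xhat := by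
      have h := (hF xhat).hasFDerivAt.add (hzero.const_mul c)
      rw [show fderiv ℝ F xhat = fderiv ℝ F xhat + c • (0 : EuclideanSpace ℝ (Fin d) →L[ℝ] ℝ) by simp]
      exact h
    have htan : y - xhat ∈ posTangentConeAt X xhat :=
      sub_mem_posTangentConeAt_of_segment_subset (hXcv.segment_subset hx hy)
    have hfd := hmin'.hasFDerivWithinAt_nonneg hG0.hasFDerivWithinAt htan
    rw [inner_neg_left, grad_inner']
    linarith
end

section
/- Under the same setting (F differentiable with Lφ ± F convex, φ σ-strongly convex, h the indicator of closed convex 𝒳, 0 < λ < 1/(2L)), let x ∈ 𝒳 and x̂ = argmin_y { F(y) + h(y) + (1/(2λ)) D_φ(y, x) }. Then ⟨∇F(x), x̂ − x⟩ ≤ −(1/(2λ) − L)·D_φ(x̂, x). -/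
lemma inner_gradient_eq_fderiv {d : ℕ} (f : EuclideanSpace ℝ (Fin d) → ℝ) {x : EuclideanSpace ℝ (Fin d)}
    (hf : DifferentiableAt ℝ f x) (v : EuclideanSpace ℝ (Fin d)) :
    (inner ℝ (gradient f x) v : ℝ) = fderiv ℝ f x v := by
  have h := hf.hasGradientAt
  rw [hasGradientAt_iff_hasFDerivAt] at h
  rw [h.fderiv, InnerProductSpace.toDual_apply_apply]

lemma grad_ineq_aux {d : ℕ} (g : EuclideanSpace ℝ (Fin d) → ℝ)
    (hg : Differentiable ℝ g) (hc : ConvexOn ℝ Set.univ g)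
    (x y : EuclideanSpace ℝ (Fin d)) :
    fderiv ℝ g x (y - x) ≤ g y - g x := by
  set f : ℝ → ℝ := fun t => g (x + t • (y - x)) with hf
  have hline : ∀ t : ℝ, HasDerivAt (fun t : ℝ => x + t • (y - x)) (y - x) t := by
    intro t
    simpa using ((hasDerivAt_id t).smul_const (y - x)).const_add x
  have hfd : HasDerivAt f (fderiv ℝ g x (y - x)) 0 := by
    have := (hg (x + (0:ℝ) • (y - x))).hasFDerivAt.comp_hasDerivAt 0 (hline 0)
    simp only [zero_smul, add_zero] at this
    exact this
  have hfc : ConvexOn ℝ Set.univ f := by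
    have := hc.comp_affineMap (AffineMap.lineMap x y : ℝ →ᵃ[ℝ] EuclideanSpace ℝ (Fin d))
    simp only [Set.preimage_univ] at this
    have heq : f = g ∘ AffineMap.lineMap x y := by
      ext t
      simp [f, AffineMap.lineMap_apply, add_comm]
    rw [heq]; exact this
  have hs := hfc.le_slope_of_hasDerivAt (Set.mem_univ (0:ℝ)) (Set.mem_univ (1:ℝ))
    zero_lt_one hfd
  rw [slope_def_field] at hs
  have h0 : f 0 = g x := by simp [f]
  have h1 : f 1 = g y := by simp [f]
  calc fderiv ℝ g x (y - x) ≤ (f 1 - f 0) / (1 - 0) := hs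
    _ = g y - g x := by rw [h0, h1]; ring

theorem stmt10 {d : ℕ} (F φ : EuclideanSpace ℝ (Fin d) → ℝ)
    (hF : Differentiable ℝ F) (hφ : Differentiable ℝ φ)
    (σ : ℝ) (hσ : 0 < σ)
    (hsc : ConvexOn ℝ Set.univ (fun z => φ z - σ / 2 * ‖z‖ ^ 2))
    (L : ℝ) (hL : 0 < L)
    (hL1 : ConvexOn ℝ Set.univ (fun z => L * φ z + F z))
    (hL2 : ConvexOn ℝ Set.univ (fun z => L * φ z - F z))
    (X : Set (EuclideanSpace ℝ (Fin d)))
    (hXne : X.Nonempty) (hXcl : IsClosed X) (hXcv : Convex ℝ X)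
    (lam : ℝ) (hlam : 0 < lam) (hlam' : lam < 1 / (2 * L))
    (D : EuclideanSpace ℝ (Fin d) → EuclideanSpace ℝ (Fin d) → ℝ)
    (hD : ∀ u v, D u v = φ u - φ v - (inner ℝ (gradient φ v) (u - v) : ℝ))
    (x xhat : EuclideanSpace ℝ (Fin d)) (hx : x ∈ X) (hxhat : xhat ∈ X)
    (hmin : ∀ y ∈ X,
      F xhat + 1 / (2 * lam) * D xhat x ≤ F y + 1 / (2 * lam) * D y x) :
    (inner ℝ (gradient F x) (xhat - x) : ℝ) ≤
      -(1 / (2 * lam) - L) * D xhat x := by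
  set g : EuclideanSpace ℝ (Fin d) → ℝ := fun z => L * φ z + F z with hg
  have hgd : Differentiable ℝ g := (hφ.const_mul L).add hF
  -- gradient inequality for g
  have key : fderiv ℝ g x (xhat - x) ≤ g xhat - g x :=
    grad_ineq_aux g hgd hL1 x xhat
  -- expand fderiv of g
  have hfd : fderiv ℝ g x (xhat - x)
      = L * (fderiv ℝ φ x (xhat - x)) + fderiv ℝ F x (xhat - x) := by
    have : fderiv ℝ g x = L • fderiv ℝ φ x + fderiv ℝ F x := by
      rw [hg]
      rw [fderiv_fun_add ((hφ x).const_mul L) (hF x), fderiv_const_mul (hφ x)]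
    rw [this]; simp
  have hiF : (inner ℝ (gradient F x) (xhat - x) : ℝ) = fderiv ℝ F x (xhat - x) :=
    inner_gradient_eq_fderiv F (hF x) _
  have hiφ : (inner ℝ (gradient φ x) (xhat - x) : ℝ) = fderiv ℝ φ x (xhat - x) :=
    inner_gradient_eq_fderiv φ (hφ x) _
  -- relative smoothness lower bound
  have hsmooth : (inner ℝ (gradient F x) (xhat - x) : ℝ)
      ≤ F xhat - F x + L * D xhat x := by
    have hDx : D xhat x = φ xhat - φ x - (inner ℝ (gradient φ x) (xhat - x) : ℝ) := hD xhat x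
    have := key
    rw [hfd] at this
    simp only [hg] at this
    rw [hDx]
    rw [hiF, hiφ]
    nlinarith [this]
  -- optimality
  have hopt : F xhat + 1 / (2 * lam) * D xhat x ≤ F x := by
    have := hmin x hx
    have hDxx : D x x = 0 := by rw [hD x x]; simp
    rw [hDxx] at this
    linarith
  linarith [hsmooth, hopt]
end
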